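/- Suboptimality and infeasibility bounds for inexact dual solutions (Theorem 1): Let $g_\gamma(\theta) = \min_{(y,\xi) \in Q_1} \{\tfrac12\|y - \bar y\|^2 + \tfrac{\gamma}{2}\|\xi\|^2 - \theta^T C (y; \xi)\}$ with unique minimizer $\eta(\theta) = (y(\theta), \xi(\theta))$, where $Q_1$ is a closed convex set and $C$ a matrix. Assume $\nabla g_\gamma(\theta) = -C\eta(\theta)$ is Lipschitz with constant $L_g = \sigma_{\max}^2(C)/\gamma$. Let $\theta^*$ maximize $g_\gamma$ over a convex set $Q_2$, let $\theta_\delta \in Q_2$ be $\delta$-optimal ($g_\gamma(\theta^*) - g_\gamma(\theta_\delta) \leq \delta$), and write $(y_\delta, \xi_\delta) = \eta(\theta_\delta)$, $(y(\gamma), \xi(\gamma)) = \eta(\theta^*)$. Then $\|C(\eta(\theta_\delta) - \eta(\theta^*))\|_2 \leq \sqrt{2\delta/\gamma}\, \sigma_{\max}(C)$. In particular, if the rows of $C$ include the identity block on the $y$-coordinates, $\|y_\delta - y(\gamma)\|_2 \leq \sqrt{2\delta/\gamma}\,\sigma_{\max}(C)$. -/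

import Mathlib

open scoped RealInnerProductSpace

section Helpers
open Set Filter Topology

variable {E : Type*} [NormedAddCommGroup E] [InnerProductSpace ℝ E] [CompleteSpace E]

lemma line_hasDerivAt {g : E → ℝ} {G : E} (d x0 : E) (t0 : ℝ)
    (h : HasGradientAt g G (x0 + t0 • d)) :
    HasDerivAt (fun t : ℝ => g (x0 + t • d)) ⟪G, d⟫ t0 := by
  have hc : HasDerivAt (fun t : ℝ => x0 + t • d) d t0 := by
    simpa using ((hasDerivAt_id t0).smul_const d).const_add x0
  have := (h.hasFDerivAt).comp_hasDerivAt t0 hc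
  simp [InnerProductSpace.toDual] at this
  exact this

lemma grad_dir_le {g : E → ℝ} {x G : E} (h : HasGradientAt g G x) (d : E) (c : ℝ)
    (hle : ∀ t ∈ Ioc (0:ℝ) 1, g (x + t • d) - g x ≤ t * c) : ⟪G, d⟫ ≤ c := by
  have hψ : HasDerivAt (fun t : ℝ => g (x + t • d)) ⟪G, d⟫ 0 :=
    line_hasDerivAt d x 0 (by simpa using h)
  have hslope := hasDerivAt_iff_tendsto_slope.1 hψ
  have hsub : 𝓝[>] (0:ℝ) ≤ 𝓝[≠] (0:ℝ) :=
    nhdsWithin_mono _ (fun t ht => ne_of_gt ht)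
  have h2 : Tendsto (slope (fun t : ℝ => g (x + t • d)) 0) (𝓝[>] 0) (𝓝 ⟪G, d⟫) :=
    hslope.mono_left hsub
  refine le_of_tendsto h2 ?_
  filter_upwards [Ioc_mem_nhdsGT_of_mem (by constructor <;> norm_num : (0:ℝ) ∈ Ico (0:ℝ) 1)]
    with t ht
  have ht0 : 0 < t := ht.1
  rw [slope_def_field]
  simp only [sub_zero]
  rw [div_le_iff₀ ht0]
  have := hle t ht
  simpa [mul_comm] using this

lemma grad_dir_ge {g : E → ℝ} {x G : E} (h : HasGradientAt g G x) (d : E) (c : ℝ)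
    (hge : ∀ t ∈ Ioc (0:ℝ) 1, t * c ≤ g (x + t • d) - g x) : c ≤ ⟪G, d⟫ := by
  have hψ : HasDerivAt (fun t : ℝ => g (x + t • d)) ⟪G, d⟫ 0 :=
    line_hasDerivAt d x 0 (by simpa using h)
  have hslope := hasDerivAt_iff_tendsto_slope.1 hψ
  have h2 : Tendsto (slope (fun t : ℝ => g (x + t • d)) 0) (𝓝[>] 0) (𝓝 ⟪G, d⟫) :=
    hslope.mono_left (nhdsWithin_mono _ (fun t ht => ne_of_gt ht))
  refine ge_of_tendsto h2 ?_
  filter_upwards [Ioc_mem_nhdsGT_of_mem (by constructor <;> norm_num : (0:ℝ) ∈ Ico (0:ℝ) 1)]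
    with t ht
  have ht0 : 0 < t := ht.1
  rw [slope_def_field]
  simp only [sub_zero]
  rw [le_div_iff₀ ht0]
  simpa [mul_comm] using hge t ht

lemma descent_lemma {g : E → ℝ} {G : E → E} (hg : ∀ x, HasGradientAt g (G x) x)
    {L : ℝ} (hLip : ∀ x y, ‖G x - G y‖ ≤ L * ‖x - y‖) (x d : E) :
    g x + ⟪G x, d⟫ - (L/2) * ‖d‖^2 ≤ g (x + d) := by
  set ψ : ℝ → ℝ := fun t => g (x + t • d) - t * ⟪G x, d⟫ + (L * ‖d‖^2 / 2) * t^2 with hψdef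
  set ψ' : ℝ → ℝ := fun t => ⟪G (x + t • d), d⟫ - ⟪G x, d⟫ + (L * ‖d‖^2) * t with hψ'def
  have hψd : ∀ t : ℝ, HasDerivAt ψ (ψ' t) t := by
    intro t
    have h1 : HasDerivAt (fun t : ℝ => g (x + t • d)) ⟪G (x + t • d), d⟫ t :=
      line_hasDerivAt d x t (hg _)
    have h2 : HasDerivAt (fun t : ℝ => t * ⟪G x, d⟫) ⟪G x, d⟫ t := by
      simpa using (hasDerivAt_id t).mul_const ⟪G x, d⟫
    have h3 : HasDerivAt (fun t : ℝ => (L * ‖d‖^2 / 2) * t^2) ((L * ‖d‖^2) * t) t := by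
      have := (hasDerivAt_pow 2 t).const_mul (L * ‖d‖^2 / 2)
      exact this.congr_deriv (by push_cast; ring)
    exact (h1.sub h2).add h3
  have hnonneg : ∀ t ∈ Icc (0:ℝ) 1, 0 ≤ ψ' t := by
    intro t ht
    have habs : |⟪G (x + t • d) - G x, d⟫| ≤ ‖G (x + t • d) - G x‖ * ‖d‖ :=
      abs_real_inner_le_norm _ _
    have hlip : ‖G (x + t • d) - G x‖ ≤ L * (t * ‖d‖) := by
      have := hLip (x + t • d) x
      simpa [norm_smul, abs_of_nonneg ht.1] using this
    have h4 : -(L * ‖d‖^2 * t) ≤ ⟪G (x + t • d) - G x, d⟫ := by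
      have := neg_abs_le ⟪G (x + t • d) - G x, d⟫
      have h5 : ‖G (x + t • d) - G x‖ * ‖d‖ ≤ L * ‖d‖^2 * t := by
        calc ‖G (x + t • d) - G x‖ * ‖d‖ ≤ (L * (t * ‖d‖)) * ‖d‖ := by
              exact mul_le_mul_of_nonneg_right hlip (norm_nonneg d)
          _ = L * ‖d‖^2 * t := by ring
      linarith [habs.trans h5]
    have : ⟪G (x + t • d) - G x, d⟫ = ⟪G (x + t • d), d⟫ - ⟪G x, d⟫ :=
      inner_sub_left _ _ _
    simp only [hψ'def]
    linarith [h4, this ▸ h4]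
  have hmono : MonotoneOn ψ (Icc (0:ℝ) 1) := by
    apply monotoneOn_of_deriv_nonneg (convex_Icc 0 1)
    · exact fun t _ => ((hψd t).differentiableAt).continuousAt.continuousWithinAt
    · exact fun t _ => ((hψd t).differentiableAt).differentiableWithinAt
    · intro t ht
      rw [(hψd t).deriv]
      exact hnonneg t (interior_subset ht)
  have h01 := hmono (by constructor <;> norm_num) (by constructor <;> norm_num) (by norm_num : (0:ℝ) ≤ 1)
  simp only [hψdef] at h01
  simp only [zero_smul, add_zero, one_smul, one_pow, pow_two, zero_mul, mul_zero, sub_zero,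
    mul_one, zero_pow] at h01
  nlinarith [h01]

lemma hasGradientAt_inner_const (c z : E) :
    HasGradientAt (fun w => ⟪c, w⟫) c z := by
  show HasFDerivAt _ _ _
  exact (InnerProductSpace.toDual ℝ E c).hasFDerivAt

lemma concave_first_order {g : E → ℝ} (hconc : ConcaveOn ℝ Set.univ g)
    {y Gy : E} (hg : HasGradientAt g Gy y) (z : E) :
    g z - g y ≤ ⟪Gy, z - y⟫ := by
  apply grad_dir_ge hg (z - y)
  intro t ht
  have hcc := hconc.2 (Set.mem_univ y) (Set.mem_univ z)
    (by linarith [ht.2] : (0:ℝ) ≤ 1 - t) (le_of_lt ht.1) (by ring)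
  have heq : y + t • (z - y) = (1 - t) • y + t • z := by
    rw [smul_sub, sub_smul, one_smul]; abel
  rw [heq]
  simp only [smul_eq_mul] at hcc
  nlinarith [hcc]

lemma cocoercivity {g : E → ℝ} {G : E → E} (hg : ∀ x, HasGradientAt g (G x) x)
    (hconc : ConcaveOn ℝ Set.univ g) {L : ℝ} (hL : 0 < L)
    (hLip : ∀ x y, ‖G x - G y‖ ≤ L * ‖x - y‖) (x y : E) :
    ‖G x - G y‖^2 ≤ 2 * L * (g y - g x - ⟪G y, y - x⟫) := by
  set φ : E → ℝ := fun z => g z - ⟪G y, z⟫ with hφdef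
  have hφg : ∀ z, HasGradientAt φ (G z - G y) z := by
    intro z
    show HasFDerivAt _ _ _
    have := (hg z).hasFDerivAt.sub (hasGradientAt_inner_const (G y) z).hasFDerivAt
    rw [map_sub]
    exact this
  have hφconc : ConcaveOn ℝ Set.univ φ := by
    apply hconc.sub
    exact ⟨convex_univ, fun a _ b _ s t hs ht hst => by
      simp [inner_add_right, inner_smul_right]⟩
  have hφmax : ∀ z, φ z ≤ φ y := by
    intro z
    have h1 := concave_first_order hφconc (hφg y) z
    simpa using h1
  set v := G x - G y with hvdef
  set n := ‖v‖^2 with hndef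
  have hd := descent_lemma hφg (L := L)
    (fun a b => by simpa using hLip a b) x (L⁻¹ • v)
  have hinner : ⟪v, L⁻¹ • v⟫ = L⁻¹ * n := by
    rw [real_inner_smul_right, real_inner_self_eq_norm_sq]
  have hnorm : ‖L⁻¹ • v‖^2 = L⁻¹^2 * n := by
    rw [norm_smul]; simp [abs_of_pos (inv_pos.2 hL), mul_pow, hndef]
  have h := hd.trans (hφmax _)
  rw [hinner, hnorm] at h
  have hL' : (L:ℝ) ≠ 0 := ne_of_gt hL
  have hsimp : L⁻¹ * n - L / 2 * (L⁻¹^2 * n) = 1/(2*L) * n := by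
    field_simp; ring
  have key : φ x + 1/(2*L) * n ≤ φ y := by linarith
  have hφdiff : φ y - φ x = g y - g x - ⟪G y, y - x⟫ := by
    simp only [hφdef, inner_sub_right]; ring
  have h2L : (0:ℝ) < 2 * L := by linarith
  have hdiv : n / (2*L) ≤ φ y - φ x := by
    have : 1/(2*L) * n = n / (2*L) := by ring
    linarith [key, this ▸ key]
  have := (div_le_iff₀ h2L).1 hdiv
  linarith [hφdiff ▸ this]

end Helpers

/-- suboptimality bound for inexact dual solutions (Theorem 1 of the paper).
Here `η(θ) = (Y θ, Ξ θ)` is the unique minimizer of the Lagrangian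
`½‖y - ȳ‖² + (γ/2)‖ξ‖² - ⟪θ, C(y;ξ)⟫` over `Q1`, where the matrix `C` acts on the
concatenated vector via `C(y;ξ) = B1 y + B2 ξ`; its transpose gradient
`∇g_γ(θ) = -Cη(θ)` is Lipschitz with constant `L_g = σ_max(C)²/γ`. -/

theorem inexact_dual_suboptimality_bound
    (m p M : ℕ)
    (B1 : EuclideanSpace ℝ (Fin m) →ₗ[ℝ] EuclideanSpace ℝ (Fin M))
    (B2 : EuclideanSpace ℝ (Fin p) →ₗ[ℝ] EuclideanSpace ℝ (Fin M))
    (ybar : EuclideanSpace ℝ (Fin m))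
    (γ : ℝ) (hγ : 0 < γ) (σ : ℝ) (hσ : 0 ≤ σ)
    -- σ is a bound on the operator (largest singular value) of C = [B1 B2]
    (hσmax : ∀ (a : EuclideanSpace ℝ (Fin m)) (b : EuclideanSpace ℝ (Fin p)),
      ‖B1 a + B2 b‖ ≤ σ * Real.sqrt (‖a‖^2 + ‖b‖^2))
    (Q1 : Set (EuclideanSpace ℝ (Fin m) × EuclideanSpace ℝ (Fin p)))
    (hQ1 : IsClosed Q1) (hQ1conv : Convex ℝ Q1)
    (Y : EuclideanSpace ℝ (Fin M) → EuclideanSpace ℝ (Fin m))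
    (Ξ : EuclideanSpace ℝ (Fin M) → EuclideanSpace ℝ (Fin p))
    (hmin : ∀ θ, (Y θ, Ξ θ) ∈ Q1 ∧ ∀ q ∈ Q1,
      (1/2) * ‖Y θ - ybar‖^2 + (γ/2) * ‖Ξ θ‖^2 - ⟪θ, B1 (Y θ) + B2 (Ξ θ)⟫ ≤
      (1/2) * ‖q.1 - ybar‖^2 + (γ/2) * ‖q.2‖^2 - ⟪θ, B1 q.1 + B2 q.2⟫)
    (g : EuclideanSpace ℝ (Fin M) → ℝ)
    (hg : ∀ θ, g θ = (1/2) * ‖Y θ - ybar‖^2 + (γ/2) * ‖Ξ θ‖^2 - ⟪θ, B1 (Y θ) + B2 (Ξ θ)⟫)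
    (hconc : ConcaveOn ℝ Set.univ g)
    (hgrad : ∀ θ, HasGradientAt g (-(B1 (Y θ) + B2 (Ξ θ))) θ)
    (hLip : ∀ θ1 θ2, ‖(B1 (Y θ1) + B2 (Ξ θ1)) - (B1 (Y θ2) + B2 (Ξ θ2))‖ ≤
      (σ^2 / γ) * ‖θ1 - θ2‖)
    (Q2 : Set (EuclideanSpace ℝ (Fin M))) (hQ2 : Convex ℝ Q2)
    (θstar : EuclideanSpace ℝ (Fin M)) (hθstar : θstar ∈ Q2)
    (hmax : ∀ θ ∈ Q2, g θ ≤ g θstar)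
    (θδ : EuclideanSpace ℝ (Fin M)) (hθδ : θδ ∈ Q2)
    (δ : ℝ) (hδpos : 0 < δ) (hδ : g θstar - g θδ ≤ δ) :
    ‖(B1 (Y θδ) + B2 (Ξ θδ)) - (B1 (Y θstar) + B2 (Ξ θstar))‖ ≤ Real.sqrt (2*δ/γ) * σ ∧
    ((∀ (a : EuclideanSpace ℝ (Fin m)) (b : EuclideanSpace ℝ (Fin p)), ‖a‖ ≤ ‖B1 a + B2 b‖)
      → ‖Y θδ - Y θstar‖ ≤ Real.sqrt (2*δ/γ) * σ) := by
  set G : EuclideanSpace ℝ (Fin M) → EuclideanSpace ℝ (Fin M) :=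
    fun θ => -(B1 (Y θ) + B2 (Ξ θ)) with hGdef
  have hGgrad : ∀ θ, HasGradientAt g (G θ) θ := hgrad
  have hGLip : ∀ θ1 θ2, ‖G θ1 - G θ2‖ ≤ (σ^2/γ) * ‖θ1 - θ2‖ := by
    intro θ1 θ2
    have : G θ1 - G θ2 = -((B1 (Y θ1) + B2 (Ξ θ1)) - (B1 (Y θ2) + B2 (Ξ θ2))) := by
      simp only [hGdef]; abel
    rw [this, norm_neg]
    exact hLip θ1 θ2
  -- first-order optimality at θstar
  have hopt : ⟪G θstar, θδ - θstar⟫ ≤ 0 := by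
    apply grad_dir_le (hGgrad θstar) (θδ - θstar) 0
    intro t ht
    have hmem : θstar + t • (θδ - θstar) ∈ Q2 := by
      have heq : θstar + t • (θδ - θstar) = (1 - t) • θstar + t • θδ := by
        rw [smul_sub, sub_smul, one_smul]; abel
      rw [heq]
      exact hQ2 hθstar hθδ (by linarith [ht.2]) (le_of_lt ht.1) (by ring)
    have := hmax _ hmem
    nlinarith [this]
  have hmain : ‖(B1 (Y θδ) + B2 (Ξ θδ)) - (B1 (Y θstar) + B2 (Ξ θstar))‖ ≤
      Real.sqrt (2*δ/γ) * σ := by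
    rcases eq_or_lt_of_le hσ with hσ0 | hσpos
    · have h0 := hLip θδ θstar
      rw [← hσ0] at h0
      simp only [ne_eq, OfNat.ofNat_ne_zero, not_false_eq_true, zero_pow, zero_div,
        zero_mul] at h0
      have : (0:ℝ) ≤ Real.sqrt (2*δ/γ) * σ := by positivity
      linarith [norm_nonneg ((B1 (Y θδ) + B2 (Ξ θδ)) - (B1 (Y θstar) + B2 (Ξ θstar))), h0]
    · have hL : (0:ℝ) < σ^2/γ := by positivity
      have hcoco := cocoercivity hGgrad hconc hL hGLip θδ θstar
      have hinner : ⟪G θstar, θstar - θδ⟫ = -⟪G θstar, θδ - θstar⟫ := by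
        rw [← inner_neg_right]; congr 1; abel
      have hb : ‖G θδ - G θstar‖^2 ≤ 2 * (σ^2/γ) * δ := by
        have h1 : g θstar - g θδ - ⟪G θstar, θstar - θδ⟫ ≤ δ := by
          rw [hinner]; linarith
        nlinarith [hcoco, h1]
      have heqn : G θδ - G θstar
          = -((B1 (Y θδ) + B2 (Ξ θδ)) - (B1 (Y θstar) + B2 (Ξ θstar))) := by
        simp only [hGdef]; abel
      rw [heqn, norm_neg] at hb
      have hrhs : (Real.sqrt (2*δ/γ) * σ)^2 = 2 * (σ^2/γ) * δ := by
        rw [mul_pow, Real.sq_sqrt (by positivity : (0:ℝ) ≤ 2*δ/γ)]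
        field_simp
      have hrhsnn : (0:ℝ) ≤ Real.sqrt (2*δ/γ) * σ := by positivity
      nlinarith [hb, hrhs, norm_nonneg ((B1 (Y θδ) + B2 (Ξ θδ)) - (B1 (Y θstar) + B2 (Ξ θstar))), hrhsnn]
  refine ⟨hmain, fun hid => ?_⟩
  have h1 := hid (Y θδ - Y θstar) (Ξ θδ - Ξ θstar)
  have h2 : B1 (Y θδ - Y θstar) + B2 (Ξ θδ - Ξ θstar)
      = (B1 (Y θδ) + B2 (Ξ θδ)) - (B1 (Y θstar) + B2 (Ξ θstar)) := by
    simp only [map_sub]; abel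
  rw [h2] at h1
  exact h1.trans hmain
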